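/- The sum 1/cos(π/5) + 2·(2·sin(π/5)·tan(π/5)) + (sin(π/10)/sin(3π/5))·tan(π/5) + (sin(3π/10)/sin(3π/5))·tan(π/5) equals (11·√5 − 17)/2. -/

import Mathlib

open Real

theorem theta5_lower_bound_path_length :
    1 / Real.cos (Real.pi / 5) +
      2 * (2 * Real.sin (Real.pi / 5) * Real.tan (Real.pi / 5)) +
      (Real.sin (Real.pi / 10) / Real.sin (3 * Real.pi / 5)) * Real.tan (Real.pi / 5) +
      (Real.sin (3 * Real.pi / 10) / Real.sin (3 * Real.pi / 5)) * Real.tan (Real.pi / 5) =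
    (11 * Real.sqrt 5 - 17) / 2 := by
  have hc : Real.cos (Real.pi / 5) = (1 + Real.sqrt 5) / 4 := Real.cos_pi_div_five
  have h5 : Real.sqrt 5 ^ 2 = 5 := Real.sq_sqrt (by norm_num)
  have h5pos : (1:ℝ) < Real.sqrt 5 := by nlinarith [Real.sqrt_nonneg 5]
  have hcpos : 0 < Real.cos (Real.pi / 5) := by rw [hc]; nlinarith
  have hspos : 0 < Real.sin (Real.pi / 5) := Real.sin_pos_of_pos_of_lt_pi
    (by positivity) (by nlinarith [Real.pi_pos])
  have hs2 : Real.sin (Real.pi / 5) ^ 2 = 1 - Real.cos (Real.pi / 5) ^ 2 := by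
    nlinarith [Real.sin_sq_add_cos_sq (Real.pi / 5)]
  have h35 : Real.sin (3 * Real.pi / 5) =
      2 * Real.sin (Real.pi / 5) * Real.cos (Real.pi / 5) := by
    have : (3:ℝ) * Real.pi / 5 = Real.pi - 2 * (Real.pi / 5) := by ring
    rw [this, Real.sin_pi_sub, Real.sin_two_mul]
  have h110 : Real.sin (Real.pi / 10) = 2 * Real.cos (Real.pi / 5) ^ 2 - 1 := by
    have : Real.pi / 10 = Real.pi / 2 - 2 * (Real.pi / 5) := by ring
    rw [this, Real.sin_pi_div_two_sub, Real.cos_two_mul]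
  have h310 : Real.sin (3 * Real.pi / 10) = Real.cos (Real.pi / 5) := by
    have : (3:ℝ) * Real.pi / 10 = Real.pi / 2 - Real.pi / 5 := by ring
    rw [this, Real.sin_pi_div_two_sub]
  rw [Real.tan_eq_sin_div_cos, h35, h110, h310]
  have hs28 : Real.sin (Real.pi / 5) ^ 2 = (5 - Real.sqrt 5) / 8 := by
    rw [hs2, hc]; nlinarith
  have hs3 : Real.sin (Real.pi / 5) ^ 3 = (5 - Real.sqrt 5) / 8 * Real.sin (Real.pi / 5) := by
    rw [pow_succ, hs28]
  field_simp
  linear_combination 8 * Real.cos (Real.pi / 5) * hs28 + ((8 - Real.sqrt 5) + (19 - 11 * Real.sqrt 5) * (Real.cos (Real.pi / 5) + (1 + Real.sqrt 5) / 4)) * hc - (7 + 11 * Real.sqrt 5) / 16 * h5
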